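/- Let N = q^k·n^2 be an odd perfect number given in Eulerian form. Then q^k < n^2. -/

import Mathlib

open ArithmeticFunction Finset
open scoped ArithmeticFunction.sigma

private lemma sig_pp_form {p : ℕ} (e : ℕ) (hp : p.Prime) : ∃ c, σ 1 (p^e) = p * c + 1 := by
  refine ⟨∑ i ∈ Finset.range e, p ^ i, ?_⟩
  rw [sigma_one_apply_prime_pow hp, Finset.sum_range_succ']
  simp [pow_succ', Finset.mul_sum]

private lemma le_sig_self {m : ℕ} (hm : 0 < m) : m ≤ σ 1 m := by
  rw [sigma_one_apply]
  exact Finset.single_le_sum (f := fun i => i) (fun i _ => Nat.zero_le i)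
    (Nat.mem_divisors_self m hm.ne')

private lemma geom_split (q h : ℕ) :
    ∑ i ∈ range (h+h), q^i = (∑ i ∈ range h, q^i) * (q^h + 1) := by
  rw [Finset.sum_range_add]
  simp only [pow_add]
  rw [← Finset.mul_sum]
  ring

/-- Key parity lemma: if every prime factor `p` of odd `s` satisfies `p ∣ q^h + 1`, and
`σ(s^2) = q^β`, then `β` is even. -/
private lemma parity_lemma {q : ℕ} (hq : q.Prime) (h' : ℕ) (s : ℕ) :
    s % 2 = 1 → (∀ p : ℕ, p.Prime → p ∣ s → p ∣ q ^ h' + 1) →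
    ∀ β : ℕ, σ 1 (s ^ 2) = q ^ β → β % 2 = 0 := by
  induction s using Nat.strong_induction_on with
  | _ s ih =>
    intro hsodd hprimes β hσ
    by_cases hs1 : s = 1
    · subst hs1
      simp only [one_pow] at hσ
      have h1 : σ 1 1 = 1 := by simp [sigma_one_apply]
      rw [h1] at hσ
      have : β = 0 := by
        by_contra hβ0
        have := Nat.one_lt_pow hβ0 hq.one_lt
        omega
      omega
    · have hs0 : s ≠ 0 := by omega
      set p := s.minFac with hp_def
      have hp : p.Prime := Nat.minFac_prime hs1
      have hps : p ∣ s := s.minFac_dvd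
      have hpodd : p ≠ 2 := by
        rintro h2
        rw [h2] at hps
        omega
      set a := s.factorization p with ha_def
      have ha : 0 < a := hp.factorization_pos_of_dvd hs0 hps
      set t := s / p ^ a with ht_def
      have hst : p ^ a * t = s := Nat.ordProj_mul_ordCompl_eq_self s p
      have hcop : Nat.Coprime p t := Nat.coprime_ordCompl hp hs0
      have htlt : t < s :=
        Nat.div_lt_self (Nat.pos_of_ne_zero hs0) (Nat.one_lt_pow ha.ne' hp.one_lt)
      have hs2 : s ^ 2 = p ^ (2 * a) * t ^ 2 := by
        rw [← hst]; ring
      have hcop2 : Nat.Coprime (p ^ (2 * a)) (t ^ 2) := Nat.Coprime.pow _ _ hcop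
      have hσs : σ 1 (p ^ (2 * a)) * σ 1 (t ^ 2) = q ^ β := by
        rw [← isMultiplicative_sigma.map_mul_of_coprime hcop2, ← hs2, hσ]
      obtain ⟨e, he_le, he⟩ := (Nat.dvd_prime_pow hq).mp ⟨σ 1 (t ^ 2), hσs.symm⟩
      have hσt : σ 1 (t ^ 2) = q ^ (β - e) := by
        have h1 : q ^ e * σ 1 (t ^ 2) = q ^ e * q ^ (β - e) := by
          rw [← pow_add, Nat.add_sub_cancel' he_le, ← he, hσs]
        exact Nat.eq_of_mul_eq_mul_left (pow_pos hq.pos e) h1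
      have he_even : e % 2 = 0 := by
        by_contra he_odd
        obtain ⟨c, hc⟩ := sig_pp_form (2 * a) hp
        haveI : NeZero p := ⟨hp.pos.ne'⟩
        have h1 : (q : ZMod p) ^ e = 1 := by
          have h2 : ((p * c + 1 : ℕ) : ZMod p) = ((q ^ e : ℕ) : ZMod p) := by
            rw [← hc, ← he]
          push_cast at h2
          rw [ZMod.natCast_self] at h2
          simpa using h2.symm
        have h2 : (q : ZMod p) ^ h' = -1 := by
          have hdvd := hprimes p hp hps
          have h3 : ((q ^ h' + 1 : ℕ) : ZMod p) = 0 :=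
            (ZMod.natCast_eq_zero_iff _ _).mpr hdvd
          push_cast at h3
          exact eq_neg_of_add_eq_zero_left h3
        have h3 : (1 : ZMod p) = -1 := by
          calc (1 : ZMod p) = ((q : ZMod p) ^ e) ^ h' := by rw [h1]; simp
            _ = ((q : ZMod p) ^ h') ^ e := by rw [← pow_mul, ← pow_mul, mul_comm]
            _ = (-1 : ZMod p) ^ e := by rw [h2]
            _ = -1 := Odd.neg_one_pow (Nat.odd_iff.mpr (by omega))
        have h4 : ((2 : ℕ) : ZMod p) = 0 := by
          push_cast
          linear_combination h3
        have h5 : p ∣ 2 := (ZMod.natCast_eq_zero_iff _ _).mp h4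
        exact hpodd ((Nat.prime_dvd_prime_iff_eq hp Nat.prime_two).mp h5)
      have hts : t ∣ s := ⟨p ^ a, by rw [mul_comm]; exact hst.symm⟩
      have ht_odd : t % 2 = 1 := by
        rcases Nat.even_or_odd t with h | h
        · exfalso
          have : (2 : ℕ) ∣ s := dvd_trans h.two_dvd hts
          omega
        · exact Nat.odd_iff.mp h
      have hrec := ih t htlt ht_odd
        (fun p' hp' hpt => hprimes p' hp' (hpt.trans hts)) (β - e) hσt
      omega

set_option maxHeartbeats 2000000 in
/-- For an odd perfect number `N = q^k * n^2` in Eulerian form, `q^k < n^2`. -/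
theorem stmt_12 (q k n : ℕ) (hq : q.Prime) (hq1 : q % 4 = 1) (hk1 : k % 4 = 1)
    (hgcd : Nat.gcd q n = 1) (hodd : Odd (q ^ k * n ^ 2))
    (hperf : Nat.Perfect (q ^ k * n ^ 2)) :
    q ^ k < n ^ 2 := by
  have hq5 : 5 ≤ q := by
    have := hq.two_le
    rcases Nat.lt_or_ge q 5 with h | h
    · interval_cases q <;> omega
    · exact h
  have hk_pos : 1 ≤ k := by omega
  have hqk_pos : 0 < q ^ k := pow_pos hq.pos k
  have hN_pos : 0 < q ^ k * n ^ 2 := hperf.2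
  have hn0 : n ≠ 0 := by
    rintro rfl
    simp at hN_pos
  have hn_odd : n % 2 = 1 := by
    by_contra h
    have h2 : 2 ∣ n := by omega
    have h3 : (2:ℕ) ∣ q ^ k * n ^ 2 :=
      dvd_mul_of_dvd_right (h2.trans (dvd_pow_self n (by norm_num))) _
    rw [Nat.odd_iff] at hodd
    omega
  -- σ(N) = 2N
  have hσN : σ 1 (q ^ k * n ^ 2) = 2 * (q ^ k * n ^ 2) := by
    rw [sigma_one_apply]
    exact (Nat.perfect_iff_sum_divisors_eq_two_mul hN_pos).mp hperf
  have hgcd' : Nat.Coprime q n := hgcd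
  have hcop : Nat.Coprime (q ^ k) (n ^ 2) := Nat.Coprime.pow _ _ hgcd'
  have hmul : σ 1 (q ^ k) * σ 1 (n ^ 2) = 2 * (q ^ k * n ^ 2) := by
    rw [← isMultiplicative_sigma.map_mul_of_coprime hcop, hσN]
  -- q^k ∣ σ(n^2)
  obtain ⟨c, hc⟩ := sig_pp_form k hq
  have hcop_q : Nat.Coprime q (σ 1 (q ^ k)) := by
    rw [hc, add_comm]
    exact (Nat.coprime_add_mul_left_right q 1 c).mpr (Nat.coprime_one_right q)
  have hcop_qk : Nat.Coprime (q ^ k) (σ 1 (q ^ k)) := Nat.Coprime.pow_left k hcop_q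
  have hdvd : q ^ k ∣ σ 1 (n ^ 2) := by
    apply hcop_qk.dvd_of_dvd_mul_right
    rw [mul_comm (σ 1 (n ^ 2)), hmul]
    exact ⟨2 * n ^ 2, by ring⟩
  obtain ⟨m, hm⟩ := hdvd
  have key : σ 1 (q ^ k) * m = 2 * n ^ 2 := by
    have h1 : q ^ k * (σ 1 (q ^ k) * m) = q ^ k * (2 * n ^ 2) := by
      rw [hm] at hmul
      calc q ^ k * (σ 1 (q ^ k) * m) = σ 1 (q ^ k) * (q ^ k * m) := by ring
        _ = 2 * (q ^ k * n ^ 2) := hmul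
        _ = q ^ k * (2 * n ^ 2) := by ring
    exact Nat.eq_of_mul_eq_mul_left hqk_pos h1
  -- σ(q^k) > q^k
  have hσq_gt : q ^ k < σ 1 (q ^ k) := by
    rw [sigma_one_apply_prime_pow hq, Finset.sum_range_succ]
    have h1 : 1 ≤ ∑ i ∈ range k, q ^ i := by
      calc 1 = q ^ 0 := by norm_num
        _ ≤ ∑ i ∈ range k, q ^ i :=
          Finset.single_le_sum (f := fun i => q ^ i) (fun i _ => Nat.zero_le _)
            (Finset.mem_range.mpr hk_pos)
    omega
  rcases Nat.lt_or_ge m 2 with hm2 | hm2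
  · -- m = 0 or m = 1
    interval_cases m
    · exfalso
      simp only [mul_zero] at key
      have : n ^ 2 = 0 := by omega
      have : n = 0 := by
        rcases Nat.pow_eq_zero.mp this with ⟨h, _⟩
        exact h
      exact hn0 this
    · -- m = 1: the hard case, derive False
      exfalso
      rw [mul_one] at hm key
      -- set up h' with k + 1 = 2 * h', h' odd
      obtain ⟨j, hj⟩ : ∃ j, k = 4 * j + 1 := ⟨k / 4, by omega⟩
      set h' := 2 * j + 1 with hh'_def
      have hk2h : k + 1 = h' + h' := by omega
      set A := ∑ i ∈ range h', q ^ i with hA_def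
      have hsplit : σ 1 (q ^ k) = A * (q ^ h' + 1) := by
        rw [sigma_one_apply_prime_pow hq, hk2h, geom_split]
      -- q^h' ≡ 1 mod 4
      have hqh4 : q ^ h' % 4 = 1 := by
        rw [Nat.pow_mod, hq1]
        simp
      set B := (q ^ h' + 1) / 2 with hB_def
      have hB : q ^ h' + 1 = 2 * B := by omega
      have hB_odd : B % 2 = 1 := by omega
      -- A is odd
      have hA_odd : A % 2 = 1 := by
        have h1 : A % 2 = (∑ i ∈ range h', q ^ i % 2) % 2 := Finset.sum_nat_mod _ _ _
        have h2 : ∀ i ∈ range h', q ^ i % 2 = 1 := by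
          intro i _
          rw [Nat.pow_mod]
          have : q % 2 = 1 := by omega
          rw [this]
          simp
        rw [Finset.sum_congr rfl h2, Finset.sum_const, card_range, smul_eq_mul, mul_one] at h1
        omega
      -- n^2 = A * B
      have hn2AB : n ^ 2 = A * B := by
        have h1 : 2 * n ^ 2 = 2 * (A * B) := by
          rw [← key, hsplit, hB]; ring
        omega
      -- A and B are coprime
      have hAB_cop : Nat.Coprime A B := by
        set d := Nat.gcd A B with hd_def
        have hdA : d ∣ A := Nat.gcd_dvd_left A B
        have hdB : d ∣ B := Nat.gcd_dvd_right A B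
        have hd2 : d ∣ 2 := by
          have hgeom : ((q : ℤ) - 1) * (A : ℤ) = (q : ℤ) ^ h' - 1 := by
            have h0 : (A : ℤ) = ∑ i ∈ range h', (q : ℤ) ^ i := by
              rw [hA_def]; push_cast; ring_nf
            rw [h0]
            linear_combination geom_sum_mul (q : ℤ) h'
          have hdA' : (d : ℤ) ∣ ((q : ℤ) - 1) * A :=
            Dvd.dvd.mul_left (Int.natCast_dvd_natCast.mpr hdA) _
          have hdB' : (d : ℤ) ∣ (q : ℤ) ^ h' + 1 := by
            have : (d : ℤ) ∣ (2 * B : ℕ) := Int.natCast_dvd_natCast.mpr (hdB.mul_left 2)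
            rw [← hB] at this
            push_cast at this
            exact this
          have : (d : ℤ) ∣ 2 := by
            have h3 : (2 : ℤ) = ((q : ℤ) ^ h' + 1) - (((q : ℤ) - 1) * A) := by
              rw [hgeom]; ring
            rw [h3]
            exact dvd_sub hdB' hdA'
          exact_mod_cast this
        have hd_odd : d ≠ 2 := by
          rintro h2
          rw [h2] at hdA
          omega
        rcases (Nat.dvd_prime Nat.prime_two).mp hd2 with h | h
        · exact h
        · exact absurd h hd_odd
      -- both A and B are squares
      obtain ⟨r, hr⟩ : ∃ r, A = r ^ 2 :=
        exists_eq_pow_of_mul_eq_pow (by rw [Nat.isUnit_iff]; exact hAB_cop) hn2AB.symm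
      obtain ⟨s, hs⟩ : ∃ s, B = s ^ 2 := by
        apply exists_eq_pow_of_mul_eq_pow (c := n) (b := A)
        · rw [Nat.isUnit_iff]
          exact hAB_cop.symm
        · rw [mul_comm]; exact hn2AB.symm
      have hn_rs : n = r * s := by
        have h1 : (r * s) ^ 2 = n ^ 2 := by
          rw [hn2AB, hr, hs]; ring
        exact (Nat.pow_left_injective (by norm_num) h1).symm
      have hrs_cop : Nat.Coprime r s := by
        have h1 : Nat.Coprime (r ^ 2) (s ^ 2) := by rw [← hr, ← hs]; exact hAB_cop
        exact Nat.Coprime.coprime_dvd_left (dvd_pow_self r (by norm_num))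
          (Nat.Coprime.coprime_dvd_right (dvd_pow_self s (by norm_num)) h1)
      -- σ(n^2) = σ(r^2) σ(s^2) = q^k
      have hσrs : σ 1 (r ^ 2) * σ 1 (s ^ 2) = q ^ k := by
        rw [← isMultiplicative_sigma.map_mul_of_coprime (Nat.Coprime.pow _ _ hrs_cop)]
        have : r ^ 2 * s ^ 2 = n ^ 2 := by rw [hn_rs]; ring
        rw [this, hm]
      obtain ⟨β, hβ_le, hβ⟩ := (Nat.dvd_prime_pow hq).mp ⟨σ 1 (r ^ 2), by rw [mul_comm]; exact hσrs.symm⟩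
      obtain ⟨α, hα_le, hα⟩ := (Nat.dvd_prime_pow hq).mp ⟨σ 1 (s ^ 2), hσrs.symm⟩
      have hαβ : α + β = k := by
        have h1 : q ^ (α + β) = q ^ k := by
          rw [pow_add, ← hα, ← hβ, hσrs]
        exact Nat.pow_right_injective hq.two_le h1
      -- bounds
      have hr0 : 0 < r := by
        rcases Nat.eq_zero_or_pos r with h | h
        · exfalso; rw [h] at hr; simp at hr; omega
        · exact h
      have hs0 : 0 < s := by
        rcases Nat.eq_zero_or_pos s with h | h
        · exfalso; rw [h] at hs; simp at hs; omega
        · exact h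
      have hA_ge : q ^ (2 * j) ≤ A := by
        rw [hA_def]
        exact Finset.single_le_sum (f := fun i => q ^ i) (fun i _ => Nat.zero_le _)
          (Finset.mem_range.mpr (by omega))
      have hα_ge : 2 * j ≤ α := by
        apply (Nat.pow_le_pow_iff_right hq.one_lt).mp
        calc q ^ (2 * j) ≤ A := hA_ge
          _ = r ^ 2 := hr
          _ ≤ σ 1 (r ^ 2) := le_sig_self (by positivity)
          _ = q ^ α := hα
      have hβ_ge : h' ≤ β := by
        by_contra hlt
        push_neg at hlt
        have h1 : q ^ h' < 2 * q ^ β := by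
          calc q ^ h' < q ^ h' + 1 := by omega
            _ = 2 * B := hB
            _ = 2 * s ^ 2 := by rw [hs]
            _ ≤ 2 * σ 1 (s ^ 2) :=
                Nat.mul_le_mul_left 2 (le_sig_self (show 0 < s ^ 2 by positivity))
            _ = 2 * q ^ β := by rw [hβ]
        have h2 : 2 * q ^ β < q ^ h' := by
          calc 2 * q ^ β < q * q ^ β :=
                (Nat.mul_lt_mul_right (pow_pos hq.pos β)).mpr (by omega)
            _ = q ^ (β + 1) := by ring
            _ ≤ q ^ h' := Nat.pow_le_pow_right hq.pos (by omega)
        omega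
      have hβ_eq : β = h' := by omega
      -- parity contradiction
      have hs_odd : s % 2 = 1 := by
        have : Odd n := Nat.odd_iff.mpr hn_odd
        rw [hn_rs] at this
        exact Nat.odd_iff.mp (Nat.odd_mul.mp this).2
      have h2s2 : 2 * s ^ 2 = q ^ h' + 1 := by rw [hB, hs]
      have hβ_even : β % 2 = 0 := by
        apply parity_lemma hq h' s hs_odd _ β hβ
        intro p hp hps
        have : p ∣ 2 * s ^ 2 := Dvd.dvd.mul_left (hps.trans (dvd_pow_self s (by norm_num))) 2
        rw [h2s2] at this
        exact this
      omega
  · -- m ≥ 2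
    obtain ⟨Y, hY⟩ : ∃ Y, σ 1 (q ^ k) = Y := ⟨_, rfl⟩
    rw [hY] at key hσq_gt
    have h1 : 2 * Y ≤ Y * m := by
      rw [mul_comm Y m]
      exact Nat.mul_le_mul_right Y hm2
    omega
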